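/- Let k ≥ 3, m : ℝ, and let ω : Fin k → ℝ be a weight vector with ω₂ = 0. If T_m(P_{n,ω}) = 0 for all n ≥ 1, then either ω_j = 0 for all 1 ≤ j ≤ k, or m = 1. -/

import Mathlib

open MvPolynomial Finset

/-- The weight coefficient `A_ω(α)` of Theorem 2.1 (for `α ≠ 0`):
`A_ω(α) = multinomial(α) · (Σ α_i ω_i) / (Σ α_i)`. -/
noncomputable def Aw {k : ℕ} (ω : Fin k → ℝ) (α : Fin k → ℕ) : ℝ :=
  (Nat.multinomial Finset.univ α : ℝ) * (∑ i, (α i : ℝ) * ω i) / (∑ i, (α i : ℝ))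

/-- The isobaric degree `Σ_{i=1}^k i·α_i` of an exponent vector. -/
def isoDeg {k : ℕ} (α : Fin k → ℕ) : ℕ := ∑ i, (i.1 + 1) * α i

/-- The (finite) set of exponent vectors of isobaric degree `n`. -/
def wipIndex (k n : ℕ) : Finset (Fin k → ℕ) :=
  (Fintype.piFinset fun _ : Fin k => Finset.range (n + 1)).filter fun α => isoDeg α = n

/-- The weighted isobaric polynomial `P_{n,ω} = Σ_α A_ω(α)·t^α`. -/
noncomputable def WIP (k n : ℕ) (ω : Fin k → ℝ) : MvPolynomial (Fin k) ℝ :=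
  ∑ α ∈ wipIndex k n, MvPolynomial.monomial (Finsupp.equivFunOnFinite.symm α) (Aw ω α)

/-- The operator `T_m(P) = D₁₁P − Σ_j t_j D_{2j}P − m·D₂P`. -/
noncomputable def Tm (k : ℕ) (hk : 2 ≤ k) (m : ℝ) (P : MvPolynomial (Fin k) ℝ) :
    MvPolynomial (Fin k) ℝ :=
  pderiv (⟨0, by omega⟩ : Fin k) (pderiv (⟨0, by omega⟩ : Fin k) P)
    - ∑ j : Fin k, X j * pderiv (⟨1, by omega⟩ : Fin k) (pderiv j P)
    - C m * pderiv (⟨1, by omega⟩ : Fin k) P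

/-- The `j`-th element `γ^{(j)}` of the string generated by `γ`. -/
def strElem (k : ℕ) (hk : 2 ≤ k) (γ : Fin k → ℕ) (j : ℕ) : Fin k → ℕ :=
  fun i => if i = (⟨0, by omega⟩ : Fin k) then γ i + 2 * j
    else if i = (⟨1, by omega⟩ : Fin k) then γ i - j else γ i

/-- The `ω`-weighted string generated by `γ`:
`S_ω(γ) = Σ_{j=0}^{γ₂} A_ω(γ^{(j)})·t^{γ^{(j)}}`. -/
noncomputable def strPoly (k : ℕ) (hk : 2 ≤ k) (ω : Fin k → ℝ) (γ : Fin k → ℕ) :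
    MvPolynomial (Fin k) ℝ :=
  ∑ j ∈ Finset.range (γ (⟨1, by omega⟩ : Fin k) + 1),
    MvPolynomial.monomial (Finsupp.equivFunOnFinite.symm (strElem k hk γ j))
      (Aw ω (strElem k hk γ j))


section Aux
variable {k : ℕ}


lemma Tm_sum (hk : 2 ≤ k) (m : ℝ) {ι : Type*} (s : Finset ι)
    (f : ι → MvPolynomial (Fin k) ℝ) :
    Tm k hk m (∑ a ∈ s, f a) = ∑ a ∈ s, Tm k hk m (f a) := by
  simp only [Tm, map_sum, Finset.mul_sum, Finset.sum_sub_distrib]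
  congr 1
  rw [Finset.sum_comm]

lemma X_mul_monomial' (j : Fin k) (t : Fin k →₀ ℕ) (c : ℝ) :
    X j * monomial t c = monomial (Finsupp.single j 1 + t) c := by
  rw [X, monomial_mul, one_mul]

lemma coeff_Tm_monomial (hk : 2 ≤ k) (m : ℝ) (s d : Fin k →₀ ℕ) (a : ℝ) :
    coeff d (Tm k hk m (monomial s a)) =
      (if s - Finsupp.single ⟨0, by omega⟩ 1 - Finsupp.single ⟨0, by omega⟩ 1 = d then
        a * (s ⟨0, by omega⟩) * ((s - Finsupp.single (⟨0, by omega⟩ : Fin k) 1 : Fin k →₀ ℕ) (⟨0, by omega⟩ : Fin k)) else 0)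
      - (∑ j : Fin k, if Finsupp.single j 1 + (s - Finsupp.single j 1 - Finsupp.single ⟨1, by omega⟩ 1) = d then
          a * (s j) * ((s - Finsupp.single j 1 : Fin k →₀ ℕ) (⟨1, by omega⟩ : Fin k)) else 0)
      - (if s - Finsupp.single ⟨1, by omega⟩ 1 = d then m * (a * (s ⟨1, by omega⟩)) else 0) := by
  simp only [Tm, pderiv_monomial, X_mul_monomial', C_mul_monomial, coeff_sub, coeff_sum,
    coeff_monomial]

lemma sum_two_support {M : Type*} [AddCommMonoid M] {ι : Type*} [Fintype ι] [DecidableEq ι]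
    (x y : ι) (hxy : x ≠ y) (f : ι → M) (hf : ∀ l, l ≠ x → l ≠ y → f l = 0) :
    ∑ l, f l = f x + f y := by
  rw [← Finset.sum_subset (Finset.subset_univ {x, y}) (fun l _ hl => by
    simp only [Finset.mem_insert, Finset.mem_singleton, not_or] at hl
    exact hf l hl.1 hl.2)]
  exact Finset.sum_pair hxy

lemma sum_pair_subset {M : Type*} [AddCommMonoid M] {ι : Type*} [DecidableEq ι]
    {s : Finset ι} (x y : ι) (hxy : x ≠ y) (hx : x ∈ s) (hy : y ∈ s) (f : ι → M)
    (hf : ∀ l ∈ s, l ≠ x → l ≠ y → f l = 0) :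
    ∑ l ∈ s, f l = f x + f y := by
  rw [← Finset.sum_subset (s₁ := {x, y}) (by
      intro l hl; simp only [Finset.mem_insert, Finset.mem_singleton] at hl
      rcases hl with rfl | rfl <;> assumption)
    (fun l hl hl2 => by
      simp only [Finset.mem_insert, Finset.mem_singleton, not_or] at hl2
      exact hf l hl hl2.1 hl2.2)]
  exact Finset.sum_pair hxy

end Aux


section Step
variable {k : ℕ}

lemma g0_mem (hk : 3 ≤ k) :
    (fun l : Fin k => if l = (⟨0, by linarith⟩ : Fin k) then 2 else 0) ∈ wipIndex k 2 := by
  simp only [wipIndex, Finset.mem_filter, Fintype.mem_piFinset, Finset.mem_range]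
  constructor
  · intro l; split <;> omega
  · simp [isoDeg, mul_ite, Finset.sum_ite_eq']

lemma e1_mem (hk : 3 ≤ k) :
    (fun l : Fin k => if l = (⟨1, by linarith⟩ : Fin k) then 1 else 0) ∈ wipIndex k 2 := by
  simp only [wipIndex, Finset.mem_filter, Fintype.mem_piFinset, Finset.mem_range]
  constructor
  · intro l; split <;> omega
  · simp [isoDeg, mul_ite, Finset.sum_ite_eq']

end Step


section Aws
variable {k : ℕ}

lemma sum_ite_cast (i : Fin k) (c : ℕ) :
    ∑ l : Fin k, ((if l = i then c else 0 : ℕ) : ℝ) = c := by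
  rw [Finset.sum_congr rfl (fun l _ => by
    show ((if l = i then c else 0 : ℕ) : ℝ) = if l = i then (c:ℝ) else 0
    split <;> simp)]
  simp [Finset.sum_ite_eq']

lemma sum_ite_mul_cast (ω : Fin k → ℝ) (i : Fin k) (c : ℕ) :
    ∑ l : Fin k, ((if l = i then c else 0 : ℕ) : ℝ) * ω l = c * ω i := by
  rw [Finset.sum_congr rfl (fun l _ => by
    show ((if l = i then c else 0 : ℕ) : ℝ) * ω l = if l = i then (c:ℝ) * ω i else 0
    split <;> simp_all)]
  simp [Finset.sum_ite_eq']

lemma Aw_single (ω : Fin k → ℝ) (i : Fin k) (c : ℕ) (hc : c ≠ 0) :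
    Aw ω (fun l => if l = i then c else 0) = ω i := by
  have hm : Nat.multinomial Finset.univ (fun l : Fin k => if l = i then c else 0) = 1 := by
    simp only [Nat.multinomial, mul_ite, mul_zero, Finset.sum_ite_eq', Finset.mem_univ, if_true]
    rw [Finset.prod_congr rfl (fun l _ => apply_ite Nat.factorial (l = i) c 0)]
    simp [Finset.prod_ite_eq', Nat.div_self, Nat.factorial_pos]
  simp only [Aw, hm, Nat.cast_one, one_mul, sum_ite_cast, sum_ite_mul_cast]
  have : (c:ℝ) ≠ 0 := Nat.cast_ne_zero.2 hc
  field_simp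
end Aws


section Aws2
variable {k : ℕ}

lemma sum_two_ite {M : Type*} [AddCommMonoid M] (x y : Fin k) (hxy : x ≠ y) (A B : M) :
    ∑ l : Fin k, (if l = x then A else if l = y then B else 0) = A + B := by
  rw [sum_two_support x y hxy _ (fun l h1 h2 => by simp [h1, h2])]
  simp [hxy, hxy.symm]

lemma prod_two_ite_fact (x y : Fin k) (hxy : x ≠ y) (A B : ℕ) :
    ∏ l : Fin k, (if l = x then A else if l = y then B else 0 : ℕ).factorial
      = A.factorial * B.factorial := by
  rw [← Finset.prod_subset (Finset.subset_univ {x, y}) (fun l _ hl => by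
    simp only [Finset.mem_insert, Finset.mem_singleton, not_or] at hl
    simp [hl.1, hl.2])]
  rw [Finset.prod_pair hxy]
  simp [hxy, hxy.symm]

lemma Aw_pair (ω : Fin k → ℝ) (x y : Fin k) (hxy : x ≠ y) (A B : ℕ)
    (hA : True) (hB : True) :
    Aw ω (fun l => if l = x then A else if l = y then B else 0) =
      ((A + B).factorial / (A.factorial * B.factorial) : ℕ) *
        ((A : ℝ) * ω x + B * ω y) / (A + B) := by
  have hm : Nat.multinomial Finset.univ (fun l : Fin k => if l = x then A else if l = y then B else 0)
      = (A + B).factorial / (A.factorial * B.factorial) := by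
    simp only [Nat.multinomial]
    rw [sum_two_ite x y hxy A B,
      Finset.prod_congr rfl (fun l _ => by
        show (if l = x then A else if l = y then B else 0).factorial
          = if l = x then A.factorial else if l = y then B.factorial else 1
        split_ifs <;> simp),
      ← Finset.prod_subset (Finset.subset_univ {x, y}) (fun l _ hl => by
        simp only [Finset.mem_insert, Finset.mem_singleton, not_or] at hl
        simp [hl.1, hl.2]),
      Finset.prod_pair hxy]
    simp [hxy, hxy.symm]
  have hnum : ∑ l : Fin k, ((if l = x then A else if l = y then B else 0 : ℕ) : ℝ) * ω l
      = (A:ℝ) * ω x + B * ω y := by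
    rw [Finset.sum_congr rfl (fun l _ => by
      show ((if l = x then A else if l = y then B else 0 : ℕ) : ℝ) * ω l
        = if l = x then (A:ℝ) * ω x else if l = y then (B:ℝ) * ω y else 0
      split_ifs <;> simp_all)]
    exact sum_two_ite x y hxy _ _
  have hden : ∑ l : Fin k, ((if l = x then A else if l = y then B else 0 : ℕ) : ℝ) = (A:ℝ) + B := by
    rw [Finset.sum_congr rfl (fun l _ => by
      show ((if l = x then A else if l = y then B else 0 : ℕ) : ℝ)
        = if l = x then (A:ℝ) else if l = y then (B:ℝ) else 0
      split_ifs <;> simp_all)]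
    exact sum_two_ite x y hxy _ _
  simp only [Aw, hm, hnum, hden]

lemma Aw_pair21 (ω : Fin k → ℝ) (x y : Fin k) (hxy : x ≠ y) :
    Aw ω (fun l => if l = x then 2 else if l = y then 1 else 0) = 2 * ω x + ω y := by
  rw [Aw_pair ω x y hxy 2 1 (by norm_num) (by norm_num)]
  norm_num [Nat.factorial]

lemma Aw_pair11 (ω : Fin k → ℝ) (x y : Fin k) (hxy : x ≠ y) :
    Aw ω (fun l => if l = x then 1 else if l = y then 1 else 0) = ω x + ω y := by
  rw [Aw_pair ω x y hxy 1 1 (by norm_num) (by norm_num)]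
  norm_num [Nat.factorial]
end Aws2


section Main
variable {k : ℕ}

lemma omega0_eq_zero (hk : 3 ≤ k) (m : ℝ) (ω : Fin k → ℝ)
    (hω : ω (⟨1, by linarith⟩ : Fin k) = 0)
    (h2 : Tm k (by linarith) m (WIP k 2 ω) = 0) : ω (⟨0, by linarith⟩ : Fin k) = 0 := by
  have hk2 : 2 ≤ k := by linarith
  set i0 : Fin k := ⟨0, by linarith⟩ with hi0
  set i1 : Fin k := ⟨1, by linarith⟩ with hi1
  have hne01 : i0 ≠ i1 := by simp [hi0, hi1, Fin.ext_iff]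
  set g0 : Fin k → ℕ := fun l => if l = i0 then 2 else 0 with hg0def
  set e1 : Fin k → ℕ := fun l => if l = i1 then 1 else 0 with he1def
  have hne : g0 ≠ e1 := by
    intro hc
    have := congrFun hc i0
    simp [hg0def, he1def, hne01] at this
  have key := congrArg (coeff 0) h2
  rw [WIP, Tm_sum, coeff_sum] at key
  rw [sum_pair_subset g0 e1 hne (g0_mem hk) (e1_mem hk) _ ?van] at key
  case van =>
    intro α hα hα0 hα1
    rw [coeff_Tm_monomial hk2, ← hi0, ← hi1]
    have hmid : (∑ j : Fin k, if Finsupp.single j 1 +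
        (Finsupp.equivFunOnFinite.symm α - Finsupp.single j 1 - Finsupp.single i1 1) = 0 then
        (Aw ω α) * ((Finsupp.equivFunOnFinite.symm α) j) *
          ((Finsupp.equivFunOnFinite.symm α - Finsupp.single j 1 : Fin k →₀ ℕ) i1) else 0) = 0 := by
      refine Finset.sum_eq_zero fun j _ => if_neg fun hc => ?_
      have := DFunLike.congr_fun hc j
      simp [Finsupp.tsub_apply, Finsupp.single_apply] at this
    rw [hmid, sub_zero]
    have hT1 : (if Finsupp.equivFunOnFinite.symm α - Finsupp.single i0 1 - Finsupp.single i0 1 = 0 then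
        (Aw ω α) * ((Finsupp.equivFunOnFinite.symm α) i0) *
          ((Finsupp.equivFunOnFinite.symm α - Finsupp.single i0 1 : Fin k →₀ ℕ) i0) else 0) = 0 := by
      split_ifs with hc
      · have hl : ∀ l, α l - (if i0 = l then 1 else 0) - (if i0 = l then 1 else 0) = 0 := by
          intro l
          have := DFunLike.congr_fun hc l
          simpa [Finsupp.tsub_apply, Finsupp.single_apply] using this
        have h0 : ∀ l, l ≠ i0 → α l = 0 := by
          intro l hli
          have := hl l
          rw [if_neg (Ne.symm hli)] at this
          omega
        have h2' : α i0 ≤ 2 := by have := hl i0; simp at this; omega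
        have hle1 : α i0 ≤ 1 := by
          by_contra hgt
          exact hα0 (funext fun l => by
            by_cases hli : l = i0
            · subst hli; simp [hg0def]; omega
            · simp [hg0def, hli, h0 l hli])
        simp only [Finsupp.tsub_apply, Finsupp.single_apply,
          Finsupp.coe_equivFunOnFinite_symm, if_pos rfl]
        rcases Nat.le_one_iff_eq_zero_or_eq_one.1 hle1 with h | h <;> simp [h]
      · rfl
    rw [hT1, zero_sub, neg_eq_zero]
    split_ifs with hc
    · have hl : ∀ l, α l - (if i1 = l then 1 else 0) = 0 := by
        intro l
        have := DFunLike.congr_fun hc l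
        simpa [Finsupp.tsub_apply, Finsupp.single_apply] using this
      have h0 : ∀ l, l ≠ i1 → α l = 0 := by
        intro l hli
        have := hl l
        rw [if_neg (Ne.symm hli)] at this
        omega
      have hle1 : α i1 ≤ 1 := by have := hl i1; simp at this; omega
      have : α i1 = 0 := by
        by_contra hgt
        exact hα1 (funext fun l => by
          by_cases hli : l = i1
          · subst hli; simp [he1def]; omega
          · simp [he1def, hli, h0 l hli])
      simp [Finsupp.coe_equivFunOnFinite_symm, this]
    · rfl
  have hmid0 : ∀ β : Fin k → ℕ, (∑ j : Fin k, if Finsupp.single j 1 +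
      (Finsupp.equivFunOnFinite.symm β - Finsupp.single j 1 - Finsupp.single i1 1) = 0 then
      (Aw ω β) * ((Finsupp.equivFunOnFinite.symm β) j) *
        ((Finsupp.equivFunOnFinite.symm β - Finsupp.single j 1 : Fin k →₀ ℕ) i1) else 0) = 0 := by
    intro β
    refine Finset.sum_eq_zero fun j _ => if_neg fun hc => ?_
    have := DFunLike.congr_fun hc j
    simp [Finsupp.tsub_apply, Finsupp.single_apply] at this
  have hTg0 : coeff 0 (Tm k hk2 m (monomial (Finsupp.equivFunOnFinite.symm g0) (Aw ω g0)))
      = 2 * ω i0 := by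
    rw [coeff_Tm_monomial hk2, ← hi0, ← hi1, hmid0, sub_zero]
    rw [if_pos (by
      ext l
      simp only [Finsupp.tsub_apply, Finsupp.single_apply,
        Finsupp.coe_equivFunOnFinite_symm, Finsupp.coe_zero, Pi.zero_apply, hg0def]
      by_cases hl : l = i0
      · subst hl; simp
      · simp [hl, Ne.symm hl])]
    rw [if_neg (by
      intro hc
      have := DFunLike.congr_fun hc i0
      simp [Finsupp.tsub_apply, Finsupp.single_apply, hg0def, hne01.symm] at this)]
    rw [sub_zero]
    have h1 : (Finsupp.equivFunOnFinite.symm g0) i0 = 2 := by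
      simp [hg0def]
    have h2' : (Finsupp.equivFunOnFinite.symm g0 - Finsupp.single i0 1 : Fin k →₀ ℕ) i0 = 1 := by
      simp [Finsupp.tsub_apply, Finsupp.single_apply, hg0def]
    rw [h1, h2', hg0def, Aw_single ω i0 2 (by norm_num)]
    norm_num
    ring
  have hTe1 : coeff 0 (Tm k hk2 m (monomial (Finsupp.equivFunOnFinite.symm e1) (Aw ω e1)))
      = -(m * ω i1) := by
    rw [coeff_Tm_monomial hk2, ← hi0, ← hi1, hmid0]
    rw [if_neg (by
      intro hc
      have := DFunLike.congr_fun hc i1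
      simp [Finsupp.tsub_apply, Finsupp.single_apply, he1def, hne01] at this)]
    rw [if_pos (by
      ext l
      simp only [Finsupp.tsub_apply, Finsupp.single_apply,
        Finsupp.coe_equivFunOnFinite_symm, Finsupp.coe_zero, Pi.zero_apply, he1def]
      by_cases hl : l = i1
      · subst hl; simp
      · simp [hl, Ne.symm hl])]
    have h1 : (Finsupp.equivFunOnFinite.symm e1) i1 = 1 := by simp [he1def]
    rw [h1, he1def, Aw_single ω i1 1 (by norm_num)]
    norm_num
  rw [hTg0, hTe1, coeff_zero, hω] at key
  linarith
end Main


section Main2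
variable {k : ℕ}

lemma pair_mem_wip (x y : Fin k) (hxy : x ≠ y) (A B n : ℕ) (hA : A ≤ n) (hB : B ≤ n)
    (hdeg : (x.1 + 1) * A + (y.1 + 1) * B = n) :
    (fun l => if l = x then A else if l = y then B else 0) ∈ wipIndex k n := by
  simp only [wipIndex, Finset.mem_filter, Fintype.mem_piFinset, Finset.mem_range]
  refine ⟨fun l => by split_ifs <;> omega, ?_⟩
  rw [isoDeg, sum_two_support x y hxy _ (fun l h1 h2 => by simp [h1, h2])]
  simp [hxy, hxy.symm, hdeg]

lemma omega_i_eq_zero (hk : 3 ≤ k) (m : ℝ) (ω : Fin k → ℝ) (i : Fin k) (hi : 2 ≤ i.1)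
    (hω0 : ω (⟨0, by linarith⟩ : Fin k) = 0) (hω1 : ω (⟨1, by linarith⟩ : Fin k) = 0)
    (hm : m ≠ 1)
    (h : Tm k (by linarith) m (WIP k (i.1 + 3) ω) = 0) : ω i = 0 := by
  have hk2 : 2 ≤ k := by linarith
  set i0 : Fin k := ⟨0, by linarith⟩ with hi0
  set i1 : Fin k := ⟨1, by linarith⟩ with hi1
  have hne01 : i0 ≠ i1 := by simp [hi0, hi1, Fin.ext_iff]
  have hne0i : i0 ≠ i := by simp [hi0, Fin.ext_iff]; omega
  have hne1i : i1 ≠ i := by simp [hi1, Fin.ext_iff]; omega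
  set g1 : Fin k → ℕ := fun l => if l = i0 then 2 else if l = i then 1 else 0 with hg1def
  set g2 : Fin k → ℕ := fun l => if l = i1 then 1 else if l = i then 1 else 0 with hg2def
  have hne : g1 ≠ g2 := by
    intro hc
    have := congrFun hc i0
    simp [hg1def, hg2def, hne01, hne0i] at this
  have hmem1 : g1 ∈ wipIndex k (i.1 + 3) :=
    pair_mem_wip i0 i hne0i 2 1 _ (by omega) (by omega) (by simp [hi0]; omega)
  have hmem2 : g2 ∈ wipIndex k (i.1 + 3) :=
    pair_mem_wip i1 i hne1i 1 1 _ (by omega) (by omega) (by simp [hi1]; omega)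
  have key := congrArg (coeff (Finsupp.single i 1)) h
  rw [WIP, Tm_sum, coeff_sum] at key
  rw [sum_pair_subset g1 g2 hne hmem1 hmem2 _ ?van] at key
  case van =>
    intro α hα hα1 hα2
    rw [coeff_Tm_monomial hk2, ← hi0, ← hi1]
    have hT1 : (if Finsupp.equivFunOnFinite.symm α - Finsupp.single i0 1 - Finsupp.single i0 1
        = Finsupp.single i 1 then
        (Aw ω α) * ((Finsupp.equivFunOnFinite.symm α) i0) *
          ((Finsupp.equivFunOnFinite.symm α - Finsupp.single i0 1 : Fin k →₀ ℕ) i0) else 0) = 0 := by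
      split_ifs with hc
      · have h0 : ∀ l, l ≠ i0 → l ≠ i → α l = 0 := by
          intro l hl0 hli
          have := DFunLike.congr_fun hc l
          simpa [Finsupp.tsub_apply, Finsupp.single_apply, Ne.symm hl0, Ne.symm hli] using this
        have hai : α i = 1 := by
          have := DFunLike.congr_fun hc i
          simpa [Finsupp.tsub_apply, Finsupp.single_apply, hne0i] using this
        have h2' : α i0 ≤ 2 := by
          have := DFunLike.congr_fun hc i0
          simp [Finsupp.tsub_apply, Finsupp.single_apply, Ne.symm hne0i] at this
          omega
        have hle1 : α i0 ≤ 1 := by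
          by_contra hgt
          refine hα1 (funext fun l => ?_)
          by_cases hl0 : l = i0
          · subst hl0; simp [hg1def]; omega
          · by_cases hli : l = i
            · subst hli; simp [hg1def, Ne.symm hne0i, hai]
            · simp [hg1def, hl0, hli, h0 l hl0 hli]
        simp only [Finsupp.tsub_apply, Finsupp.single_apply,
          Finsupp.coe_equivFunOnFinite_symm, if_pos rfl]
        rcases Nat.le_one_iff_eq_zero_or_eq_one.1 hle1 with hz | hz <;> simp [hz]
      · rfl
    have hmid : (∑ j : Fin k, if Finsupp.single j 1 +
        (Finsupp.equivFunOnFinite.symm α - Finsupp.single j 1 - Finsupp.single i1 1)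
          = Finsupp.single i 1 then
        (Aw ω α) * ((Finsupp.equivFunOnFinite.symm α) j) *
          ((Finsupp.equivFunOnFinite.symm α - Finsupp.single j 1 : Fin k →₀ ℕ) i1) else 0) = 0 := by
      refine Finset.sum_eq_zero fun j _ => ?_
      by_cases hji : j = i
      · subst hji
        split_ifs with hc
        · have h0 : ∀ l, l ≠ j → l ≠ i1 → α l = 0 := by
            intro l hlj hl1
            have := DFunLike.congr_fun hc l
            simpa [Finsupp.add_apply, Finsupp.tsub_apply, Finsupp.single_apply,
              Ne.symm hlj, Ne.symm hl1] using this
          have haj : α j ≤ 1 := by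
            have := DFunLike.congr_fun hc j
            simp [Finsupp.add_apply, Finsupp.tsub_apply, Finsupp.single_apply, hne1i] at this
            omega
          have ha1 : α i1 ≤ 1 := by
            have := DFunLike.congr_fun hc i1
            simp [Finsupp.add_apply, Finsupp.tsub_apply, Finsupp.single_apply,
              Ne.symm hne1i] at this
            omega
          by_cases hz : α j = 0
          · simp [hz]
          by_cases hz1 : α i1 = 0
          · simp [Finsupp.tsub_apply, Finsupp.single_apply, Ne.symm hne1i, hz1]
          · exfalso
            refine hα2 (funext fun l => ?_)
            by_cases hl1 : l = i1
            · subst hl1; simp [hg2def]; omega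
            · by_cases hlj : l = j
              · subst hlj; simp [hg2def, Ne.symm hne1i]; omega
              · simp [hg2def, hl1, hlj, h0 l hlj hl1]
        · rfl
      · refine if_neg fun hc => ?_
        have := DFunLike.congr_fun hc j
        simp [Finsupp.add_apply, Finsupp.tsub_apply, Finsupp.single_apply, Ne.symm hji] at this
    have hT3 : (if Finsupp.equivFunOnFinite.symm α - Finsupp.single i1 1 = Finsupp.single i 1 then
        m * ((Aw ω α) * ((Finsupp.equivFunOnFinite.symm α) i1)) else 0) = 0 := by
      split_ifs with hc
      · have h0 : ∀ l, l ≠ i1 → l ≠ i → α l = 0 := by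
          intro l hl1 hli
          have := DFunLike.congr_fun hc l
          simpa [Finsupp.tsub_apply, Finsupp.single_apply, Ne.symm hl1, Ne.symm hli] using this
        have hai : α i = 1 := by
          have := DFunLike.congr_fun hc i
          simpa [Finsupp.tsub_apply, Finsupp.single_apply, hne1i] using this
        have ha1 : α i1 ≤ 1 := by
          have := DFunLike.congr_fun hc i1
          simp [Finsupp.tsub_apply, Finsupp.single_apply, Ne.symm hne1i] at this
          omega
        by_cases hz : α i1 = 0
        · simp [hz]
        · exfalso
          refine hα2 (funext fun l => ?_)
          by_cases hl1 : l = i1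
          · subst hl1; simp [hg2def]; omega
          · by_cases hli : l = i
            · subst hli; simp [hg2def, Ne.symm hne1i, hai]
            · simp [hg2def, hl1, hli, h0 l hl1 hli]
      · rfl
    rw [hT1, hmid, hT3]
    ring
  have hTg1 : coeff (Finsupp.single i 1)
      (Tm k hk2 m (monomial (Finsupp.equivFunOnFinite.symm g1) (Aw ω g1))) = 2 * ω i := by
    rw [coeff_Tm_monomial hk2, ← hi0, ← hi1]
    have hmid : (∑ j : Fin k, if Finsupp.single j 1 +
        (Finsupp.equivFunOnFinite.symm g1 - Finsupp.single j 1 - Finsupp.single i1 1)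
          = Finsupp.single i 1 then
        (Aw ω g1) * ((Finsupp.equivFunOnFinite.symm g1) j) *
          ((Finsupp.equivFunOnFinite.symm g1 - Finsupp.single j 1 : Fin k →₀ ℕ) i1) else 0) = 0 := by
      refine Finset.sum_eq_zero fun j _ => if_neg fun hc => ?_
      have := DFunLike.congr_fun hc i0
      simp [Finsupp.add_apply, Finsupp.tsub_apply, Finsupp.single_apply, hg1def,
        Ne.symm hne01, Ne.symm hne0i, hne0i] at this
      obtain ⟨-, h2⟩ := this
      split_ifs at h2 <;> omega
    rw [hmid, sub_zero]
    rw [if_pos (by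
      ext l
      simp only [Finsupp.tsub_apply, Finsupp.single_apply,
        Finsupp.coe_equivFunOnFinite_symm, hg1def]
      by_cases hl0 : l = i0
      · subst hl0; simp [hne0i, Ne.symm hne0i]
      · by_cases hli : l = i
        · simp [hli, hne0i, Ne.symm hne0i]
        · simp [hl0, hli, Ne.symm hl0, Ne.symm hli])]
    rw [if_neg (by
      intro hc
      have := DFunLike.congr_fun hc i0
      simp [Finsupp.tsub_apply, Finsupp.single_apply, hg1def,
        Ne.symm hne01, Ne.symm hne0i] at this)]
    rw [sub_zero]
    have h1 : (Finsupp.equivFunOnFinite.symm g1) i0 = 2 := by simp [hg1def]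
    have h2' : (Finsupp.equivFunOnFinite.symm g1 - Finsupp.single i0 1 : Fin k →₀ ℕ) i0 = 1 := by
      simp [Finsupp.tsub_apply, Finsupp.single_apply, hg1def]
    rw [h1, h2', hg1def, Aw_pair21 ω i0 i hne0i, hω0]
    norm_num
    ring
  have hTg2 : coeff (Finsupp.single i 1)
      (Tm k hk2 m (monomial (Finsupp.equivFunOnFinite.symm g2) (Aw ω g2)))
        = -(ω i) - m * ω i := by
    rw [coeff_Tm_monomial hk2, ← hi0, ← hi1]
    rw [if_neg (by
      intro hc
      have := DFunLike.congr_fun hc i1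
      simp [Finsupp.tsub_apply, Finsupp.single_apply, hg2def,
        hne01, Ne.symm hne1i, hne1i] at this)]
    have hmid : (∑ j : Fin k, if Finsupp.single j 1 +
        (Finsupp.equivFunOnFinite.symm g2 - Finsupp.single j 1 - Finsupp.single i1 1)
          = Finsupp.single i 1 then
        (Aw ω g2) * ((Finsupp.equivFunOnFinite.symm g2) j) *
          ((Finsupp.equivFunOnFinite.symm g2 - Finsupp.single j 1 : Fin k →₀ ℕ) i1) else 0)
        = Aw ω g2 := by
      rw [Finset.sum_eq_single_of_mem i (Finset.mem_univ i) (fun j _ hji => if_neg fun hc => by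
        have := DFunLike.congr_fun hc j
        simp [Finsupp.add_apply, Finsupp.tsub_apply, Finsupp.single_apply, hg2def,
          Ne.symm hji] at this)]
      rw [if_pos (by
        ext l
        simp only [Finsupp.add_apply, Finsupp.tsub_apply, Finsupp.single_apply,
          Finsupp.coe_equivFunOnFinite_symm, hg2def]
        by_cases hl1 : l = i1
        · subst hl1; simp [hne1i, Ne.symm hne1i]
        · by_cases hli : l = i
          · subst hli; simp [Ne.symm hne1i]
          · simp [hl1, hli, Ne.symm hl1, Ne.symm hli])]
      have h1 : (Finsupp.equivFunOnFinite.symm g2) i = 1 := by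
        simp [hg2def, Ne.symm hne1i]
      have h2' : (Finsupp.equivFunOnFinite.symm g2 - Finsupp.single i 1 : Fin k →₀ ℕ) i1 = 1 := by
        simp [Finsupp.tsub_apply, Finsupp.single_apply, hg2def, hne1i, Ne.symm hne1i]
      rw [h1, h2']
      norm_num
    rw [hmid]
    rw [if_pos (by
      ext l
      simp only [Finsupp.tsub_apply, Finsupp.single_apply,
        Finsupp.coe_equivFunOnFinite_symm, hg2def]
      by_cases hl1 : l = i1
      · subst hl1; simp [hne1i, Ne.symm hne1i]
      · by_cases hli : l = i
        · subst hli; simp [Ne.symm hne1i, hne1i]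
        · simp [hl1, hli, Ne.symm hl1, Ne.symm hli])]
    have h1 : (Finsupp.equivFunOnFinite.symm g2) i1 = 1 := by simp [hg2def]
    rw [h1, hg2def, Aw_pair11 ω i1 i hne1i, hω1]
    norm_num
  rw [hTg1, hTg2, coeff_zero] at key
  have hfac : (1 - m) * ω i = 0 := by linarith
  rcases mul_eq_zero.1 hfac with hz | hz
  · exact absurd (by linarith : m = 1) hm
  · exact hz
end Main2


/-- The remark after Theorem 4.3: if `ω₂ = 0` and `T_m` annihilates the whole
weighted sequence, then either `ω = 0` or `m = 1`. -/
theorem omega_two_zero_case (k : ℕ) (hk : 3 ≤ k) (m : ℝ) (ω : Fin k → ℝ)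
    (hω : ω (⟨1, by omega⟩ : Fin k) = 0)
    (h : ∀ n, 1 ≤ n → Tm k (by omega) m (WIP k n ω) = 0) :
    (∀ j, ω j = 0) ∨ m = 1 := by
  by_cases hm : m = 1
  · exact Or.inr hm
  · left
    have hω0 : ω (⟨0, by omega⟩ : Fin k) = 0 :=
      omega0_eq_zero hk m ω hω (h 2 (by norm_num))
    intro j
    rcases Nat.lt_or_ge j.1 2 with hj | hj
    · interval_cases hjv : j.1
      · have : j = (⟨0, by omega⟩ : Fin k) := Fin.ext hjv
        rw [this]; exact hω0
      · have : j = (⟨1, by omega⟩ : Fin k) := Fin.ext hjv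
        rw [this]; exact hω
    · exact omega_i_eq_zero hk m ω j hj hω0 hω hm (h (j.1 + 3) (by omega))
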